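/- arXiv:2307.13618 — 4 statements merged into one kernel-verified Lean document; each statement's English description precedes it below -/
import Mathlib

section
/- Let M : [0,τ] → Sym_n(ℝ) be a differentiable function taking values in the n×n real symmetric matrices such that ∂_t M(t) ⪰ M(t)² (in the positive semidefinite order) for all t ∈ [0,τ]. Then for every unit vector w ∈ ℝⁿ and every t ∈ [0,τ] with 1 − t⟨w, M(0)w⟩ > 0, one has ⟨w, M(t)w⟩ ≥ ⟨w, M(0)w⟩ / (1 − t⟨w, M(0)w⟩). -/
open Matrix

noncomputable section

/-- Lemma: scalar bound from a matrix differential inequality.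
If `M : [0,τ] → Sym_n(ℝ)` is differentiable with `∂_t M(t) ⪰ M(t)²` on `[0,τ]`,
then for every unit vector `w` and every `t ∈ [0,τ]` with `1 − t⟨w, M(0)w⟩ > 0`,
`⟨w, M(t)w⟩ ≥ ⟨w, M(0)w⟩ / (1 − t⟨w, M(0)w⟩)`. -/
theorem matrix_diff_ineq_scalar_bound
    {n : ℕ} (τ : ℝ) (hτ : 0 ≤ τ)
    (M : ℝ → Matrix (Fin n) (Fin n) ℝ)
    (hsymm : ∀ t ∈ Set.Icc (0:ℝ) τ, (M t).IsSymm)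
    (hdiff : ∀ t ∈ Set.Icc (0:ℝ) τ, ∀ i j : Fin n,
      DifferentiableAt ℝ (fun s => M s i j) t)
    (hineq : ∀ t ∈ Set.Icc (0:ℝ) τ,
      ((Matrix.of fun i j => deriv (fun s => M s i j) t) - M t * M t).PosSemidef) :
    ∀ w : Fin n → ℝ, (∑ i, (w i)^2 = 1) →
      ∀ t ∈ Set.Icc (0:ℝ) τ, 0 < 1 - t * (w ⬝ᵥ (M 0).mulVec w) →
        (w ⬝ᵥ (M 0).mulVec w) / (1 - t * (w ⬝ᵥ (M 0).mulVec w))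
          ≤ w ⬝ᵥ (M t).mulVec w := by
  intro w hw t₀ ht₀ hpos
  set f : ℝ → ℝ := fun s => w ⬝ᵥ (M s).mulVec w with hf_def
  set g : ℝ → ℝ := fun t =>
    w ⬝ᵥ (Matrix.of fun i j => deriv (fun s => M s i j) t).mulVec w with hg_def
  -- derivative of f
  have hderiv : ∀ t ∈ Set.Icc (0:ℝ) τ, HasDerivAt f (g t) t := by
    intro t ht
    have hM : ∀ i j : Fin n, HasDerivAt (fun s => M s i j) (deriv (fun s => M s i j) t) t :=
      fun i j => (hdiff t ht i j).hasDerivAt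
    have H : HasDerivAt (fun s => ∑ i, w i * ∑ j, M s i j * w j)
        (∑ i, w i * ∑ j, deriv (fun s => M s i j) t * w j) t := by
      apply HasDerivAt.fun_sum
      intro i _
      exact (HasDerivAt.fun_sum fun j _ => (hM i j).mul_const (w j)).const_mul (w i)
    have e1 : f = fun s => ∑ i, w i * ∑ j, M s i j * w j := by
      funext s; simp [hf_def, dotProduct, Matrix.mulVec]
    have e2 : g t = ∑ i, w i * ∑ j, deriv (fun s => M s i j) t * w j := by
      simp [hg_def, dotProduct, Matrix.mulVec]
    rw [e1, e2]; exact H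
  -- the key scalar differential inequality : f t ^ 2 ≤ g t
  have hbound : ∀ t ∈ Set.Icc (0:ℝ) τ, f t ^ 2 ≤ g t := by
    intro t ht
    have hps := (hineq t ht).dotProduct_mulVec_nonneg w
    rw [star_trivial, Matrix.sub_mulVec, dotProduct_sub, sub_nonneg] at hps
    refine le_trans ?_ hps
    set v : Fin n → ℝ := (M t).mulVec w with hv_def
    have hsq : w ⬝ᵥ (M t * M t) *ᵥ w = v ⬝ᵥ v := by
      rw [← Matrix.mulVec_mulVec, Matrix.dotProduct_mulVec, ← hv_def]
      congr 1
      conv_lhs => rw [← (hsymm t ht).eq]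
      exact Matrix.vecMul_transpose _ _
    rw [hsq]
    have hcs : (∑ i, w i * v i) ^ 2 ≤ (∑ i, (w i)^2) * (∑ i, (v i)^2) :=
      Finset.sum_mul_sq_le_sq_mul_sq _ _ _
    rw [hw, one_mul] at hcs
    calc f t ^ 2 = (∑ i, w i * v i) ^ 2 := by simp [hf_def, dotProduct, hv_def]
      _ ≤ ∑ i, (v i)^2 := hcs
      _ = v ⬝ᵥ v := by simp [dotProduct, pow_two]
  -- notation
  set a : ℝ := w ⬝ᵥ (M 0).mulVec w with ha_def
  have hf0 : f 0 = a := rfl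
  have ht₀0 : (0:ℝ) ≤ t₀ := ht₀.1
  -- lower bound on the denominator on [0, t₀]
  set δ : ℝ := min 1 (1 - t₀ * a) with hδ_def
  have hδpos : 0 < δ := lt_min one_pos hpos
  have hden : ∀ t ∈ Set.Icc (0:ℝ) t₀, δ ≤ 1 - t * a := by
    intro t ht
    rcases le_or_gt 0 a with h0a | h0a
    · have : t * a ≤ t₀ * a := mul_le_mul_of_nonneg_right ht.2 h0a
      calc δ ≤ 1 - t₀ * a := min_le_right _ _
        _ ≤ 1 - t * a := by linarith
    · have : t * a ≤ 0 := mul_nonpos_of_nonneg_of_nonpos ht.1 h0a.le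
      calc δ ≤ 1 := min_le_left _ _
        _ ≤ 1 - t * a := by linarith
  have hdenpos : ∀ t ∈ Set.Icc (0:ℝ) t₀, 0 < 1 - t * a :=
    fun t ht => lt_of_lt_of_le hδpos (hden t ht)
  set C : ℝ := 2 * |a| / δ + 1 with hC_def
  have hIcc_sub : Set.Icc (0:ℝ) t₀ ⊆ Set.Icc (0:ℝ) τ :=
    Set.Icc_subset_Icc le_rfl ht₀.2
  -- main comparison for every ε > 0
  have key : ∀ ε : ℝ, 0 < ε → a / (1 - t₀ * a) - ε * Real.exp (C * t₀) ≤ f t₀ := by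
    intro ε hε
    set B : ℝ → ℝ := fun t => a / (1 - t * a) - ε * Real.exp (C * t) with hB_def
    set B' : ℝ → ℝ := fun t => a^2 / (1 - t * a)^2 - ε * (Real.exp (C * t) * C) with hB'_def
    have hBderiv : ∀ x ∈ Set.Icc (0:ℝ) t₀, HasDerivAt B (B' x) x := by
      intro x hx
      have hne : 1 - x * a ≠ 0 := (hdenpos x hx).ne'
      have h1 : HasDerivAt (fun t : ℝ => 1 - t * a) (-a) x := by
        simpa using ((hasDerivAt_id x).mul_const a).const_sub 1
      have h2 : HasDerivAt (fun t : ℝ => a / (1 - t * a))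
          ((0 * (1 - x * a) - a * (-a)) / (1 - x * a)^2) x :=
        (hasDerivAt_const x a).div h1 hne
      have h3' : HasDerivAt (fun t : ℝ => C * t) C x := by
        simpa using (hasDerivAt_id x).const_mul C
      have h3 : HasDerivAt (fun t : ℝ => ε * Real.exp (C * t))
          (ε * (Real.exp (C * x) * C)) x := h3'.exp.const_mul ε
      have := h2.sub h3
      exact this.congr_deriv (by simp only [hB'_def]; ring)
    have hfderiv : ∀ x ∈ Set.Ico (0:ℝ) t₀, HasDerivWithinAt f (g x) (Set.Ici x) x :=
      fun x hx => (hderiv x (hIcc_sub (Set.Ico_subset_Icc_self hx))).hasDerivWithinAt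
    have hcontB : ContinuousOn B (Set.Icc (0:ℝ) t₀) :=
      fun x hx => (hBderiv x hx).continuousAt.continuousWithinAt
    have hcontf : ContinuousOn f (Set.Icc (0:ℝ) t₀) :=
      fun x hx => ((hderiv x (hIcc_sub hx)).continuousAt).continuousWithinAt
    have hinit : B 0 ≤ f 0 := by
      simp only [hB_def, hf0, mul_zero, zero_mul, Real.exp_zero, mul_one, sub_zero, div_one]
      nlinarith
    have hcmp : ∀ x ∈ Set.Ico (0:ℝ) t₀, B x = f x → B' x < g x := by
      intro x hx hBx
      have hxIcc : x ∈ Set.Icc (0:ℝ) t₀ := Set.Ico_subset_Icc_self hx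
      have hdpos : 0 < 1 - x * a := hdenpos x hxIcc
      have hδle : δ ≤ 1 - x * a := hden x hxIcc
      have hfsq : f x ^ 2 ≤ g x := hbound x (hIcc_sub hxIcc)
      set p : ℝ := a / (1 - x * a) with hp_def
      set e : ℝ := Real.exp (C * x) with he_def
      have hepos : 0 < e := Real.exp_pos _
      have hpbound : 2 * p < C := by
        have h1 : p ≤ |a| / δ := by
          rw [hp_def, div_le_div_iff₀ hdpos hδpos]
          calc a * δ ≤ |a| * δ := mul_le_mul_of_nonneg_right (le_abs_self a) hδpos.le
            _ ≤ |a| * (1 - x * a) := mul_le_mul_of_nonneg_left hδle (abs_nonneg a)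
        have h2 : 2 * (|a| / δ) < C := by
          rw [hC_def, mul_div_assoc]; linarith
        have h3 : 2 * p ≤ 2 * (|a| / δ) :=
          mul_le_mul_of_nonneg_left h1 (by norm_num)
        exact lt_of_le_of_lt h3 h2
      have hBsq : B x ^ 2 = p^2 - 2 * p * (ε * e) + (ε * e)^2 := by
        rw [hB_def]; ring
      have hB'x : B' x = p^2 - ε * (e * C) := by
        rw [hB'_def, hp_def, div_pow]
      have hlt : B' x < B x ^ 2 := by
        rw [hBsq, hB'x]
        nlinarith [mul_pos hε hepos, sq_nonneg (ε * e)]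
      calc B' x < B x ^ 2 := hlt
        _ = f x ^ 2 := by rw [hBx]
        _ ≤ g x := hfsq
    have := image_le_of_deriv_right_lt_deriv_boundary' hcontB
      (fun x hx => (hBderiv x (Set.Ico_subset_Icc_self hx)).hasDerivWithinAt)
      hinit hcontf hfderiv hcmp (Set.right_mem_Icc.2 ht₀0)
    simpa [hB_def] using this
  -- let ε → 0
  refine le_of_forall_pos_le_add ?_
  intro ε' hε'
  have hexp : 0 < Real.exp (C * t₀) := Real.exp_pos _
  have := key (ε' / Real.exp (C * t₀)) (div_pos hε' hexp)
  rw [div_mul_cancel₀ _ hexp.ne'] at this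
  linarith
end
end

section
/- Let M : [0,τ] → Sym_n(ℝ) be a differentiable function taking values in the n×n real symmetric matrices such that ∂_t M(t) ⪰ M(t)² (in the positive semidefinite order) for all t ∈ [0,τ], and let λ_1, …, λ_n be the eigenvalues of M(0). Then for every t ∈ [0,τ] with 1 − λ_i t > 0 for all i, one has Tr[M(t)] ≥ Σ_{i=1}^{n} λ_i / (1 − λ_i t). -/
open Matrix
open Set

noncomputable section

/-- Scalar Riccati comparison: if `f' ≥ f²` on `[0,t]` and `1 - f 0 * t > 0`, then
`f t ≥ f 0 / (1 - f 0 * t)`. -/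
lemma riccati_scalar {f : ℝ → ℝ} {t : ℝ} (ht : 0 ≤ t)
    (hdiff : ∀ s ∈ Set.Icc (0:ℝ) t, DifferentiableAt ℝ f s)
    (hineq : ∀ s ∈ Set.Icc (0:ℝ) t, f s ^ 2 ≤ deriv f s)
    (hpos : 0 < 1 - f 0 * t) :
    f 0 / (1 - f 0 * t) ≤ f t := by
  have hcont : ContinuousOn f (Icc 0 t) := fun s hs => (hdiff s hs).continuousAt.continuousWithinAt
  have hsub : interior (Icc (0:ℝ) t) ⊆ Icc 0 t := interior_subset
  have hmono : MonotoneOn f (Icc 0 t) := by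
    apply monotoneOn_of_deriv_nonneg (convex_Icc 0 t) hcont
      (fun s hs => (hdiff s (hsub hs)).differentiableWithinAt)
    intro s hs
    exact le_trans (sq_nonneg _) (hineq s (hsub hs))
  have h0t : (0:ℝ) ∈ Icc (0:ℝ) t := ⟨le_refl 0, ht⟩
  have htt : t ∈ Icc (0:ℝ) t := ⟨ht, le_refl t⟩
  -- key: if f never vanishes on [0,t], then (f t)⁻¹ ≤ (f 0)⁻¹ - t
  have key : (∀ s ∈ Icc (0:ℝ) t, f s ≠ 0) → (f t)⁻¹ + t ≤ (f 0)⁻¹ := by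
    intro hne
    have hanti : AntitoneOn (fun s => (f s)⁻¹ + s) (Icc 0 t) := by
      apply antitoneOn_of_deriv_nonpos (convex_Icc 0 t)
      · exact ((hcont.inv₀ hne).add continuousOn_id)
      · intro s hs
        exact (((hdiff s (hsub hs)).inv (hne s (hsub hs))).add
          (differentiableAt_id)).differentiableWithinAt
      · intro s hs
        have hD : HasDerivAt (fun s => (f s)⁻¹ + s)
            (-(deriv f s) / (f s) ^ 2 + 1) s :=
          (((hdiff s (hsub hs)).hasDerivAt).inv (hne s (hsub hs))).add (hasDerivAt_id s)
        rw [hD.deriv]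
        have h1 : f s ^ 2 ≤ deriv f s := hineq s (hsub hs)
        have h2 : 0 < f s ^ 2 :=
          lt_of_le_of_ne (sq_nonneg _) (Ne.symm (pow_ne_zero 2 (hne s (hsub hs))))
        have h3 : (1:ℝ) ≤ deriv f s / f s ^ 2 := (one_le_div h2).mpr h1
        rw [neg_div]
        linarith
    have := hanti h0t htt ht
    simpa using this
  set l := f 0 with hl
  rcases lt_trichotomy l 0 with hneg | hzero | hposl
  · -- l < 0
    by_cases hall : ∀ s ∈ Icc (0:ℝ) t, f s < 0
    · have hne : ∀ s ∈ Icc (0:ℝ) t, f s ≠ 0 := fun s hs => (hall s hs).ne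
      have h1 : (f t)⁻¹ ≤ (1 - l * t) / l := by
        have hk := key hne
        have hll : l ≠ 0 := hneg.ne
        calc (f t)⁻¹ ≤ l⁻¹ - t := by linarith
          _ = (1 - l * t) / l := by field_simp; try ring
      have hft : f t < 0 := hall t htt
      have hrt : (1 - l * t) / l < 0 := div_neg_of_pos_of_neg hpos hneg
      have h2 : ((1 - l * t) / l)⁻¹ ≤ ((f t)⁻¹)⁻¹ :=
        (inv_le_inv_of_neg hrt (inv_lt_zero.mpr hft)).mpr h1
      rw [inv_inv, inv_div] at h2
      exact h2
    · push_neg at hall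
      obtain ⟨s₀, hs₀, hfs₀⟩ := hall
      have : (0:ℝ) ≤ f t := le_trans hfs₀ (hmono hs₀ htt hs₀.2)
      have : l / (1 - l * t) ≤ 0 := div_nonpos_of_nonpos_of_nonneg hneg.le hpos.le
      linarith
  · simp [hzero] at hpos ⊢
    have := hmono h0t htt ht
    rw [← hl, hzero] at this
    simpa using this
  · -- l > 0
    have hallpos : ∀ s ∈ Icc (0:ℝ) t, 0 < f s := fun s hs =>
      lt_of_lt_of_le hposl (hmono h0t hs hs.1)
    have hne : ∀ s ∈ Icc (0:ℝ) t, f s ≠ 0 := fun s hs => (hallpos s hs).ne'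
    have h1 : (f t)⁻¹ ≤ (1 - l * t) / l := by
      have := key hne
      have h3 : (f t)⁻¹ ≤ l⁻¹ - t := by linarith
      have hll : l ≠ 0 := hposl.ne'
      calc (f t)⁻¹ ≤ l⁻¹ - t := h3
        _ = (1 - l * t) / l := by field_simp; try ring
    have hrt : 0 < (1 - l * t) / l := div_pos hpos hposl
    have hft : 0 < f t := hallpos t htt
    have h2 : ((1 - l * t) / l)⁻¹ ≤ ((f t)⁻¹)⁻¹ :=
      inv_anti₀ (inv_pos.mpr hft) h1
    rw [inv_inv, inv_div] at h2
    exact h2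

lemma quad_eq_sum {n : ℕ} (A : Matrix (Fin n) (Fin n) ℝ) (w : Fin n → ℝ) :
    w ⬝ᵥ (A *ᵥ w) = ∑ j, ∑ k, w j * A j k * w k := by
  simp [dotProduct, mulVec, Finset.mul_sum, mul_assoc]

lemma quad_sq {n : ℕ} {A : Matrix (Fin n) (Fin n) ℝ} (hA : A.IsSymm) (w : Fin n → ℝ) :
    w ⬝ᵥ ((A * A) *ᵥ w) = (A *ᵥ w) ⬝ᵥ (A *ᵥ w) := by
  rw [← mulVec_mulVec, dotProduct_mulVec]
  congr 1
  nth_rewrite 1 [← hA]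
  exact vecMul_transpose A w


/-- Corollary: trace bound from a matrix differential inequality.
If `M : [0,τ] → Sym_n(ℝ)` is differentiable with `∂_t M(t) ⪰ M(t)²` on `[0,τ]`, and
`λ_1, …, λ_n` are the eigenvalues of `M(0)`, then for every `t ∈ [0,τ]` with
`1 − λ_i t > 0` for all `i`, `Tr[M(t)] ≥ ∑ᵢ λ_i / (1 − λ_i t)`. -/
theorem matrix_diff_ineq_trace_bound
    {n : ℕ} (τ : ℝ) (hτ : 0 ≤ τ)
    (M : ℝ → Matrix (Fin n) (Fin n) ℝ)
    (hsymm : ∀ t ∈ Set.Icc (0:ℝ) τ, (M t).IsSymm)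
    (hdiff : ∀ t ∈ Set.Icc (0:ℝ) τ, ∀ i j : Fin n,
      DifferentiableAt ℝ (fun s => M s i j) t)
    (hineq : ∀ t ∈ Set.Icc (0:ℝ) τ,
      ((Matrix.of fun i j => deriv (fun s => M s i j) t) - M t * M t).PosSemidef) :
    ∀ (h0 : (M 0).IsHermitian), ∀ t ∈ Set.Icc (0:ℝ) τ,
      (∀ i : Fin n, 0 < 1 - h0.eigenvalues i * t) →
        ∑ i, h0.eigenvalues i / (1 - h0.eigenvalues i * t) ≤ (M t).trace := by
  intro h0 t ht hpos
  classical
  set l := h0.eigenvalues with hl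
  set U : Matrix (Fin n) (Fin n) ℝ := (h0.eigenvectorUnitary : Matrix (Fin n) (Fin n) ℝ) with hU
  have hUU : star U * U = 1 := (Unitary.mem_iff.mp h0.eigenvectorUnitary.2).1
  have hUU' : U * star U = 1 := (Unitary.mem_iff.mp h0.eigenvectorUnitary.2).2
  set v : Fin n → Fin n → ℝ := fun i j => U j i with hv
  set f : Fin n → ℝ → ℝ := fun i s => v i ⬝ᵥ (M s *ᵥ v i) with hf
  -- columns are unit vectors
  have hnorm : ∀ i, v i ⬝ᵥ v i = 1 := by
    intro i
    have := congrArg (fun A => A i i) hUU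
    simpa [Matrix.mul_apply, Matrix.conjTranspose_apply, Matrix.one_apply, dotProduct] using this
  -- spectral theorem: M 0 * U = U * diagonal l
  have hspec : M 0 * U = U * Matrix.diagonal l := by
    have h := h0.spectral_theorem
    calc M 0 * U = (U * Matrix.diagonal (RCLike.ofReal ∘ l) * star U) * U := by rw [h]; rfl
      _ = U * Matrix.diagonal (RCLike.ofReal ∘ l) * (star U * U) := by
          rw [Matrix.mul_assoc]
      _ = U * Matrix.diagonal l := by rw [hUU, mul_one]; rfl
  -- initial value
  have hf0 : ∀ i, f i 0 = l i := by
    intro i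
    have hvec : M 0 *ᵥ v i = fun j => U j i * l i := by
      funext j
      have : (M 0 *ᵥ v i) j = (M 0 * U) j i := by
        simp [Matrix.mulVec, Matrix.mul_apply, dotProduct, hv]
      rw [this, hspec, Matrix.mul_diagonal]
    rw [hf]
    simp only [hvec]
    have : (v i ⬝ᵥ fun j => U j i * l i) = (v i ⬝ᵥ v i) * l i := by
      simp [dotProduct, Finset.sum_mul, hv, mul_assoc]
    rw [this, hnorm i, one_mul]
  -- trace identity
  have htrace : (M t).trace = ∑ i, f i t := by
    have h1 : (M t).trace = (star U * M t * U).trace := by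
      rw [Matrix.trace_mul_cycle, hUU', Matrix.one_mul]
    rw [h1, Matrix.trace]
    apply Finset.sum_congr rfl
    intro i _
    simp only [Matrix.diag_apply, Matrix.mul_apply, Matrix.conjTranspose_apply, hf, dotProduct,
      Matrix.mulVec, hv, Matrix.star_apply, star_trivial, Finset.sum_mul, Finset.mul_sum]
    rw [Finset.sum_comm]
    apply Finset.sum_congr rfl; intro j _
    apply Finset.sum_congr rfl; intro k _
    ring
  rw [htrace]
  apply Finset.sum_le_sum
  intro i _
  rw [← hf0 i]
  -- apply the scalar lemma to f i
  have hsubset : Set.Icc (0:ℝ) t ⊆ Set.Icc (0:ℝ) τ := Set.Icc_subset_Icc le_rfl ht.2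
  -- derivative of f i
  have hD : ∀ s ∈ Set.Icc (0:ℝ) τ, HasDerivAt (f i)
      (v i ⬝ᵥ ((Matrix.of fun j k => deriv (fun s' => M s' j k) s) *ᵥ v i)) s := by
    intro s hs
    have : HasDerivAt (fun s' => ∑ j, ∑ k, v i j * M s' j k * v i k)
        (∑ j, ∑ k, v i j * deriv (fun s' => M s' j k) s * v i k) s := by
      apply HasDerivAt.fun_sum; intro j _
      apply HasDerivAt.fun_sum; intro k _
      exact (((hdiff s hs j k).hasDerivAt).const_mul (v i j)).mul_const (v i k)
    have heq : (fun s' => ∑ j, ∑ k, v i j * M s' j k * v i k) = f i := by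
      funext s'
      rw [hf]; exact (quad_eq_sum (M s') (v i)).symm
    rw [heq] at this
    convert this using 1
    exact quad_eq_sum _ (v i)
  apply riccati_scalar ht.1
  · intro s hs
    exact (hD s (hsubset hs)).differentiableAt
  · intro s hs
    have hs' := hsubset hs
    rw [(hD s hs').deriv]
    -- positive semidefiniteness
    have hps := (hineq s hs').dotProduct_mulVec_nonneg (v i)
    have hstar : star (v i) = v i := by funext j; simp
    rw [hstar, Matrix.sub_mulVec, dotProduct_sub, sub_nonneg] at hps
    refine le_trans ?_ hps
    -- Cauchy-Schwarz
    rw [quad_sq (hsymm s hs') (v i)]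
    have hcs := Finset.sum_mul_sq_le_sq_mul_sq Finset.univ (v i) (M s *ᵥ v i)
    have h1 : ∑ j, v i j ^ 2 = v i ⬝ᵥ v i := by simp [dotProduct, sq]
    have h2 : ∑ j, (M s *ᵥ v i) j ^ 2 = (M s *ᵥ v i) ⬝ᵥ (M s *ᵥ v i) := by
      simp [dotProduct, sq]
    rw [h1, hnorm i, one_mul, h2] at hcs
    calc f i s ^ 2 = (∑ j, v i j * (M s *ᵥ v i) j) ^ 2 := by rw [hf]; rfl
      _ ≤ (M s *ᵥ v i) ⬝ᵥ (M s *ᵥ v i) := hcs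
  · rw [hf0 i]; exact hpos i
end
end

section
/- Let M : [0,τ] → Sym_n(ℝ) be a differentiable function taking values in the n×n real symmetric matrices such that ∂_t M(t) ⪰ M(t)² (in the positive semidefinite order) for all t ∈ [0,τ]. Then for every unit vector w ∈ ℝⁿ, the function c_w : [0,τ] → ℝ defined by c_w(t) = exp(−∫₀ᵗ ⟨w, M(s)w⟩ ds) is concave. Consequently, for all t with 0 < t < τ and every unit vector w, −1/t ≤ ⟨w, M(t)w⟩ ≤ 1/(τ − t). -/
open Matrix

noncomputable section

/-- Lemma: matrix displacement convexity from a matrix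
differential inequality. If `M : [0,τ] → Sym_n(ℝ)` is differentiable with
`∂_t M(t) ⪰ M(t)²` on `[0,τ]`, then for every unit vector `w` the function
`c_w(t) = exp(−∫₀ᵗ ⟨w, M(s)w⟩ ds)` is concave on `[0,τ]`; consequently, for
`0 < t < τ`, `−1/t ≤ ⟨w, M(t)w⟩ ≤ 1/(τ − t)`. -/
theorem matrix_diff_ineq_displacement_convexity
    {n : ℕ} (τ : ℝ) (hτ : 0 ≤ τ)
    (M : ℝ → Matrix (Fin n) (Fin n) ℝ)
    (hsymm : ∀ t ∈ Set.Icc (0:ℝ) τ, (M t).IsSymm)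
    (hdiff : ∀ t ∈ Set.Icc (0:ℝ) τ, ∀ i j : Fin n,
      DifferentiableAt ℝ (fun s => M s i j) t)
    (hineq : ∀ t ∈ Set.Icc (0:ℝ) τ,
      ((Matrix.of fun i j => deriv (fun s => M s i j) t) - M t * M t).PosSemidef) :
    ∀ w : Fin n → ℝ, (∑ i, (w i)^2 = 1) →
      ConcaveOn ℝ (Set.Icc (0:ℝ) τ)
        (fun t => Real.exp (-(∫ s in (0:ℝ)..t, w ⬝ᵥ (M s).mulVec w))) ∧
      (∀ t : ℝ, 0 < t → t < τ →
        -(1/t) ≤ w ⬝ᵥ (M t).mulVec w ∧ w ⬝ᵥ (M t).mulVec w ≤ 1/(τ - t)) := by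
  intro w hw
  set f : ℝ → ℝ := fun t => w ⬝ᵥ (M t).mulVec w with hfdef
  set D : ℝ → ℝ :=
    fun t => w ⬝ᵥ (Matrix.of fun i j => deriv (fun s => M s i j) t).mulVec w with hDdef
  -- derivative of `f`
  have hfd : ∀ t ∈ Set.Icc (0:ℝ) τ, HasDerivAt f (D t) t := by
    intro t ht
    have h1 : HasDerivAt (fun s => ∑ i, ∑ j, w i * (M s i j * w j))
        (∑ i, ∑ j, w i * (deriv (fun s => M s i j) t * w j)) t := by
      refine HasDerivAt.fun_sum fun i _ => HasDerivAt.fun_sum fun j _ => ?_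
      exact (((hdiff t ht i j).hasDerivAt).mul_const (w j)).const_mul (w i)
    have e1 : f = fun s => ∑ i, ∑ j, w i * (M s i j * w j) := by
      funext s
      simp [hfdef, dotProduct, Matrix.mulVec, Finset.mul_sum]
    have e2 : D t = ∑ i, ∑ j, w i * (deriv (fun s => M s i j) t * w j) := by
      simp [hDdef, dotProduct, Matrix.mulVec, Finset.mul_sum]
    rw [e1, e2]; exact h1
  -- the key differential inequality `f' ≥ f²`
  have hkey : ∀ t ∈ Set.Icc (0:ℝ) τ, (f t)^2 ≤ D t := by
    intro t ht
    have h0 := (hineq t ht).dotProduct_mulVec_nonneg w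
    rw [star_trivial] at h0
    set v : Fin n → ℝ := (M t).mulVec w with hv
    have hvw : Matrix.vecMul w (M t) = v := by
      rw [← Matrix.mulVec_transpose, (hsymm t ht).eq]
    have hMM : w ⬝ᵥ (M t * M t).mulVec w = v ⬝ᵥ v := by
      rw [← Matrix.mulVec_mulVec, Matrix.dotProduct_mulVec, hvw]
    rw [Matrix.sub_mulVec, dotProduct_sub, hMM] at h0
    have hCS : (f t)^2 ≤ v ⬝ᵥ v := by
      have := Finset.sum_mul_sq_le_sq_mul_sq Finset.univ w v
      have hvv : v ⬝ᵥ v = ∑ i, (v i)^2 := by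
        simp [dotProduct, sq]
      have hft : f t = ∑ i, w i * v i := rfl
      rw [hft, hvv]
      calc (∑ i, w i * v i)^2 ≤ (∑ i, (w i)^2) * ∑ i, (v i)^2 := this
        _ = ∑ i, (v i)^2 := by rw [hw, one_mul]
    linarith
  -- continuity and integrability of `f`
  have hfc : ContinuousOn f (Set.Icc (0:ℝ) τ) :=
    fun t ht => ((hfd t ht).differentiableAt.continuousAt).continuousWithinAt
  have hfint : MeasureTheory.IntegrableOn f (Set.uIcc (0:ℝ) τ) := by
    rw [Set.uIcc_of_le hτ]
    exact hfc.integrableOn_Icc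
  -- the primitive `g` and the function `c`
  set g : ℝ → ℝ := fun t => ∫ s in (0:ℝ)..t, f s with hgdef
  have hgc : ContinuousOn g (Set.Icc (0:ℝ) τ) := by
    have := intervalIntegral.continuousOn_primitive_interval hfint
    rwa [Set.uIcc_of_le hτ] at this
  set c : ℝ → ℝ := fun t => Real.exp (-(g t)) with hcdef
  have hcc : ContinuousOn c (Set.Icc (0:ℝ) τ) :=
    (Real.continuous_exp.comp_continuousOn hgc.neg)
  have hcpos : ∀ t, 0 < c t := fun t => Real.exp_pos _
  -- derivative of `g` at interior points
  have hgd : ∀ t ∈ Set.Ioo (0:ℝ) τ, HasDerivAt g (f t) t := by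
    intro t ht
    have htmem : t ∈ Set.Icc (0:ℝ) τ := Set.mem_Icc_of_Ioo ht
    have hint : IntervalIntegrable f MeasureTheory.volume 0 t := by
      apply ContinuousOn.intervalIntegrable
      rw [Set.uIcc_of_le ht.1.le]
      exact hfc.mono (Set.Icc_subset_Icc le_rfl ht.2.le)
    have hmeas : StronglyMeasurableAtFilter f (nhds t) := by
      refine ⟨Set.Ioo 0 τ, Ioo_mem_nhds ht.1 ht.2, ?_⟩
      exact (hfc.mono Set.Ioo_subset_Icc_self).aestronglyMeasurable measurableSet_Ioo
    exact intervalIntegral.integral_hasDerivAt_right hint hmeas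
      ((hfd t htmem).differentiableAt.continuousAt)
  -- first and second derivatives of `c` at interior points
  set c' : ℝ → ℝ := fun t => Real.exp (-(g t)) * (-(f t)) with hc'def
  have hcd : ∀ t ∈ Set.Ioo (0:ℝ) τ, HasDerivAt c (c' t) t := by
    intro t ht
    exact ((hgd t ht).neg).exp
  set c'' : ℝ → ℝ :=
    fun t => Real.exp (-(g t)) * (-(f t)) * (-(f t)) + Real.exp (-(g t)) * (-(D t)) with hc''def
  have hcd2 : ∀ t ∈ Set.Ioo (0:ℝ) τ, HasDerivAt c' (c'' t) t := by
    intro t ht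
    exact (((hgd t ht).neg).exp).mul (hfd t (Set.mem_Icc_of_Ioo ht)).neg
  have hc''nonpos : ∀ t ∈ Set.Ioo (0:ℝ) τ, c'' t ≤ 0 := by
    intro t ht
    have h1 := hkey t (Set.mem_Icc_of_Ioo ht)
    have h2 : (0:ℝ) < Real.exp (-(g t)) := Real.exp_pos _
    have : c'' t = Real.exp (-(g t)) * ((f t)^2 - D t) := by ring
    rw [this]
    exact mul_nonpos_of_nonneg_of_nonpos h2.le (by linarith)
  -- concavity
  have hconc : ConcaveOn ℝ (Set.Icc (0:ℝ) τ) c := by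
    apply concaveOn_of_hasDerivWithinAt2_nonpos (convex_Icc 0 τ) hcc
      (f' := c') (f'' := c'')
    · intro x hx
      rw [interior_Icc] at hx
      exact (hcd x hx).hasDerivWithinAt
    · intro x hx
      rw [interior_Icc] at hx
      exact (hcd2 x hx).hasDerivWithinAt
    · intro x hx
      rw [interior_Icc] at hx
      exact hc''nonpos x hx
  refine ⟨hconc, ?_⟩
  -- the consequence: bounds on f t for 0 < t < τ
  intro t ht0 htτ
  have htmem : t ∈ Set.Icc (0:ℝ) τ := ⟨ht0.le, htτ.le⟩
  have h0mem : (0:ℝ) ∈ Set.Icc (0:ℝ) τ := ⟨le_rfl, hτ⟩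
  have hτmem : τ ∈ Set.Icc (0:ℝ) τ := ⟨hτ, le_rfl⟩
  have hct : HasDerivAt c (c' t) t := hcd t ⟨ht0, htτ⟩
  have hc0 : c 0 = 1 := by
    simp [hcdef, hgdef, intervalIntegral.integral_same]
  constructor
  · -- lower bound: -(1/t) ≤ f t, from slope over [0, t]
    have hs := hconc.le_slope_of_hasDerivAt h0mem htmem ht0 hct
    rw [slope_def_field] at hs
    have hc't : c' t = c t * (-(f t)) := rfl
    rw [hc0, hc't, sub_zero] at hs
    -- hs : c t * (-(f t)) ≤ (c t - 1) / t
    have hs2 : c t * (-(f t)) * t ≤ c t - 1 := (le_div_iff₀ ht0).mp hs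
    have h3 : (0:ℝ) < 1 + f t * t := by nlinarith [hcpos t]
    have h4 : -(1:ℝ)/t < f t := (div_lt_iff₀ ht0).mpr (by linarith)
    have : -(1/t) = -(1:ℝ)/t := by ring
    rw [this]
    exact h4.le
  · -- upper bound: f t ≤ 1/(τ - t), from slope over [t, τ]
    have hτt : (0:ℝ) < τ - t := by linarith
    have hs := hconc.slope_le_of_hasDerivAt htmem hτmem htτ hct
    rw [slope_def_field] at hs
    have hc't : c' t = c t * (-(f t)) := rfl
    rw [hc't] at hs
    -- hs : (c τ - c t) / (τ - t) ≤ c t * (-(f t))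
    have hs2 : c τ - c t ≤ c t * (-(f t)) * (τ - t) := (div_le_iff₀ hτt).mp hs
    have h3 : f t * (τ - t) < 1 := by nlinarith [hcpos t, hcpos τ]
    have h4 : f t < 1/(τ - t) := (lt_div_iff₀ hτt).mpr (by linarith)
    exact h4.le
end
end

section
/- Let M : [0,τ] → Sym_n(ℝ) be a differentiable function taking values in the n×n real symmetric matrices such that ∂_t M(t) ⪰ M(t)² (in the positive semidefinite order) for all t ∈ [0,τ], and let λ_1, …, λ_n be the eigenvalues of M(0). If λ_i < 1/τ for all i, then ∫₀^τ Tr[M(t)] dt ≥ −Σ_{i=1}^{n} log(1 − τ λ_i). -/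
open Matrix Set

noncomputable section
theorem scalar_riccati_integral (τ : ℝ) (hτ : 0 < τ) (g : ℝ → ℝ)
    (hdiff : ∀ t ∈ Set.Icc (0:ℝ) τ, DifferentiableAt ℝ g t)
    (hineq : ∀ t ∈ Set.Icc (0:ℝ) τ, (g t)^2 ≤ deriv g t)
    (hlt : g 0 < 1/τ) :
    -Real.log (1 - τ * g 0) ≤ ∫ t in (0:ℝ)..τ, g t := by
  set c : ℝ → ℝ := fun t => min (max t 0) τ with hc
  have hcont_g : ContinuousOn g (Set.Icc 0 τ) := fun t ht =>
    (hdiff t ht).continuousAt.continuousWithinAt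
  have hc_mem : ∀ t, c t ∈ Set.Icc (0:ℝ) τ := fun t =>
    ⟨le_min (le_max_right _ _) hτ.le, min_le_right _ _⟩
  have hc_cont : Continuous c := (continuous_id.max continuous_const).min continuous_const
  set G : ℝ → ℝ := fun t => g (c t) with hG
  have hGcont : Continuous G := hcont_g.comp_continuous hc_cont hc_mem
  have hc_eq : ∀ t ∈ Set.Icc (0:ℝ) τ, c t = t := by
    intro t ht
    simp [hc, max_eq_left ht.1, min_eq_left ht.2]
  have hGg : ∀ t ∈ Set.Icc (0:ℝ) τ, G t = g t := fun t ht => by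
    simp [hG, hc_eq t ht]
  set I : ℝ → ℝ := fun t => ∫ s in (0:ℝ)..t, G s with hI
  set y : ℝ → ℝ := fun t => Real.exp (-(I t)) with hy
  have hIder : ∀ t, HasDerivAt I (G t) t := fun t =>
    (hGcont.integral_hasStrictDerivAt 0 t).hasDerivAt
  have hyder : ∀ t, HasDerivAt y (-(G t) * y t) t := by
    intro t
    have := ((hIder t).neg).exp
    simpa [hy, mul_comm] using this
  set y' : ℝ → ℝ := fun t => -(G t) * y t with hy'
  have hypos : ∀ t, 0 < y t := fun t => Real.exp_pos _
  have hycont : Continuous y := continuous_iff_continuousAt.mpr fun t => (hyder t).continuousAt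
  -- G eventually equals g near interior points
  have hGg_ev : ∀ x ∈ Set.Ioo (0:ℝ) τ, G =ᶠ[nhds x] g := by
    intro x hx
    filter_upwards [Ioo_mem_nhds hx.1 hx.2] with s hs
    exact hGg s (Ioo_subset_Icc_self hs)
  have hy'der : ∀ x ∈ Set.Ioo (0:ℝ) τ,
      HasDerivAt y' ((g x ^ 2 - deriv g x) * y x) x := by
    intro x hx
    have hx' : x ∈ Set.Icc (0:ℝ) τ := Ioo_subset_Icc_self hx
    have hGd : HasDerivAt G (deriv g x) x :=
      HasDerivAt.congr_of_eventuallyEq ((hdiff x hx').hasDerivAt) (hGg_ev x hx)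
    have := (hGd.neg).mul (hyder x)
    have heq : -deriv g x * y x + -G x * (-G x * y x) = (g x ^ 2 - deriv g x) * y x := by
      rw [hGg x hx']; ring
    exact heq ▸ this
  have hanti : AntitoneOn y' (Set.Icc 0 τ) := by
    apply antitoneOn_of_hasDerivWithinAt_nonpos (convex_Icc 0 τ)
      (f' := fun x => (g x ^ 2 - deriv g x) * y x)
    · exact (hGcont.neg.mul hycont).continuousOn
    · intro x hx
      rw [interior_Icc] at hx
      exact ((hy'der x hx).hasDerivWithinAt)
    · intro x hx
      rw [interior_Icc] at hx
      have hx' : x ∈ Set.Icc (0:ℝ) τ := Ioo_subset_Icc_self hx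
      exact mul_nonpos_of_nonpos_of_nonneg (sub_nonpos.mpr (hineq x hx')) (hypos x).le
  -- MVT
  obtain ⟨d, hd, hslope⟩ := exists_hasDerivAt_eq_slope y y' hτ hycont.continuousOn
    (fun x _ => hyder x)
  have hy0 : y 0 = 1 := by simp [hy, hI]
  have h0mem : (0:ℝ) ∈ Set.Icc (0:ℝ) τ := ⟨le_refl _, hτ.le⟩
  have hdmem : d ∈ Set.Icc (0:ℝ) τ := Ioo_subset_Icc_self hd
  have hstep : (y τ - 1) / τ ≤ -(g 0) := by
    have h1 : y' d ≤ y' 0 := hanti h0mem hdmem hd.1.le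
    have h2 : y' 0 = -(g 0) := by
      simp [hy', hy0, hGg 0 h0mem]
    have h3 : (y τ - 1) / τ = y' d := by
      rw [hslope, hy0]; norm_num
    rw [h3, ← h2]; exact h1
  have hyτ : y τ ≤ 1 - τ * g 0 := by
    rw [div_le_iff₀ hτ] at hstep
    nlinarith
  have hpos : 0 < 1 - τ * g 0 := by
    have : τ * g 0 < 1 := by
      have := (lt_div_iff₀ hτ).mp hlt
      nlinarith
    linarith
  have hlog : -(I τ) ≤ Real.log (1 - τ * g 0) :=
    (Real.le_log_iff_exp_le hpos).mpr hyτ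
  have hIeq : I τ = ∫ t in (0:ℝ)..τ, g t := by
    apply intervalIntegral.integral_congr
    intro t ht
    rw [Set.uIcc_of_le hτ.le] at ht
    exact hGg t ht
  linarith [hlog, hIeq ▸ hlog]


/-- Corollary: integrated trace bound. If
`M : [0,τ] → Sym_n(ℝ)` is differentiable with `∂_t M(t) ⪰ M(t)²` on `[0,τ]`,
and the eigenvalues `λ_i` of `M(0)` all satisfy `λ_i < 1/τ`, then
`∫₀^τ Tr[M(t)] dt ≥ −∑ᵢ log(1 − τ λ_i)`. -/
theorem matrix_diff_ineq_integrated_trace_bound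
    {n : ℕ} (τ : ℝ) (hτ : 0 < τ)
    (M : ℝ → Matrix (Fin n) (Fin n) ℝ)
    (hsymm : ∀ t ∈ Set.Icc (0:ℝ) τ, (M t).IsSymm)
    (hdiff : ∀ t ∈ Set.Icc (0:ℝ) τ, ∀ i j : Fin n,
      DifferentiableAt ℝ (fun s => M s i j) t)
    (hineq : ∀ t ∈ Set.Icc (0:ℝ) τ,
      ((Matrix.of fun i j => deriv (fun s => M s i j) t) - M t * M t).PosSemidef) :
    ∀ (h0 : (M 0).IsHermitian),
      (∀ i : Fin n, h0.eigenvalues i < 1/τ) →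
        -(∑ i, Real.log (1 - τ * h0.eigenvalues i)) ≤ ∫ t in (0:ℝ)..τ, (M t).trace := by
  intro h0 hlt
  set v : Fin n → (Fin n → ℝ) := fun i => ⇑(h0.eigenvectorBasis i) with hv
  set g : Fin n → ℝ → ℝ := fun i t => v i ⬝ᵥ (M t) *ᵥ (v i) with hg
  have hdot : ∀ i k, v i ⬝ᵥ v k = if i = k then 1 else 0 := by
    intro i k
    have := (orthonormal_iff_ite.mp h0.eigenvectorBasis.orthonormal) i k
    rw [EuclideanSpace.inner_eq_star_dotProduct] at this
    rw [dotProduct_comm]; simpa [hv] using this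
  have hvv : ∀ i, v i ⬝ᵥ v i = 1 := fun i => by simpa using hdot i i
  -- derivative of g i
  have key : ∀ i, ∀ t ∈ Set.Icc (0:ℝ) τ, HasDerivAt (g i)
      ((v i) ⬝ᵥ (Matrix.of fun j k => deriv (fun s => M s j k) t) *ᵥ (v i)) t := by
    intro i t ht
    have e1 : ∀ (A : Matrix (Fin n) (Fin n) ℝ),
        v i ⬝ᵥ A *ᵥ v i = ∑ j, ∑ k, v i j * (A j k * v i k) := by
      intro A; simp [dotProduct, Matrix.mulVec, Finset.mul_sum]
    have h1 : HasDerivAt (fun t => ∑ j, ∑ k, v i j * (M t j k * v i k))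
        (∑ j, ∑ k, v i j * (deriv (fun s => M s j k) t * v i k)) t := by
      apply HasDerivAt.fun_sum; intro j _; apply HasDerivAt.fun_sum; intro k _
      exact (((hdiff t ht j k).hasDerivAt).mul_const (v i k)).const_mul (v i j)
    have e2 : (g i) = fun t => ∑ j, ∑ k, v i j * (M t j k * v i k) :=
      funext fun t => e1 (M t)
    rw [e2, e1]
    exact h1
  have hgdiff : ∀ i, ∀ t ∈ Set.Icc (0:ℝ) τ, DifferentiableAt ℝ (g i) t :=
    fun i t ht => (key i t ht).differentiableAt
  have hgineq : ∀ i, ∀ t ∈ Set.Icc (0:ℝ) τ, (g i t)^2 ≤ deriv (g i) t := by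
    intro i t ht
    rw [(key i t ht).deriv]
    set D : Matrix (Fin n) (Fin n) ℝ := Matrix.of fun j k => deriv (fun s => M s j k) t with hD
    have hps := (hineq t ht).dotProduct_mulVec_nonneg (v i)
    have h2 : (v i) ⬝ᵥ (M t * M t) *ᵥ (v i) ≤ (v i) ⬝ᵥ D *ᵥ (v i) := by
      rw [Matrix.sub_mulVec, dotProduct_sub] at hps
      have : star (v i) = v i := by simp
      rw [this] at hps
      linarith [hps]
    set w : Fin n → ℝ := (M t) *ᵥ (v i) with hw
    have h3 : (v i) ⬝ᵥ (M t * M t) *ᵥ (v i) = w ⬝ᵥ w := by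
      rw [← Matrix.mulVec_mulVec, Matrix.dotProduct_mulVec]
      congr 1
      calc v i ᵥ* M t = v i ᵥ* (M t)ᵀ := by rw [(hsymm t ht).eq]
        _ = M t *ᵥ v i := Matrix.vecMul_transpose _ _
    have hcs : (v i ⬝ᵥ w)^2 ≤ (v i ⬝ᵥ v i) * (w ⬝ᵥ w) := by
      have := Finset.sum_mul_sq_le_sq_mul_sq Finset.univ (v i) w
      simpa [dotProduct, sq, Finset.mul_sum, mul_pow] using this
    have : (g i t)^2 ≤ w ⬝ᵥ w := by
      have hgw : g i t = v i ⬝ᵥ w := rfl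
      rw [hgw]
      calc (v i ⬝ᵥ w)^2 ≤ (v i ⬝ᵥ v i) * (w ⬝ᵥ w) := hcs
        _ = w ⬝ᵥ w := by rw [hvv i, one_mul]
    linarith [h3 ▸ h2]
  have hg0 : ∀ i, g i 0 = h0.eigenvalues i := by
    intro i
    have : (M 0) *ᵥ (v i) = h0.eigenvalues i • (v i) := h0.mulVec_eigenvectorBasis i
    simp only [hg, this, dotProduct_smul, smul_eq_mul, hvv i, mul_one]
  -- trace identity
  have htr : ∀ A : Matrix (Fin n) (Fin n) ℝ, A.trace = ∑ i, v i ⬝ᵥ A *ᵥ v i := by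
    intro A
    set U : Matrix (Fin n) (Fin n) ℝ := Matrix.of fun j i => v i j with hU
    have hUtU : Uᵀ * U = 1 := by
      ext i k
      have : (Uᵀ * U) i k = v i ⬝ᵥ v k := by
        simp [Matrix.mul_apply, hU, dotProduct]
      rw [this, hdot i k, Matrix.one_apply]
    have hUUt : U * Uᵀ = 1 := mul_eq_one_comm.mp hUtU
    have hdiag : ∀ i, (Uᵀ * A * U) i i = v i ⬝ᵥ A *ᵥ v i := by
      intro i
      simp only [Matrix.mul_apply, Matrix.transpose_apply, hU, Matrix.of_apply,
        dotProduct, Matrix.mulVec, Finset.sum_mul, Finset.mul_sum]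
      rw [Finset.sum_comm]
      apply Finset.sum_congr rfl; intro j _
      apply Finset.sum_congr rfl; intro k _
      ring
    calc A.trace = (1 * A).trace := by rw [one_mul]
      _ = (U * Uᵀ * A).trace := by rw [hUUt]
      _ = (Uᵀ * A * U).trace := (Matrix.trace_mul_cycle Uᵀ A U).symm
      _ = ∑ i, (Uᵀ * A * U) i i := by rfl
      _ = ∑ i, v i ⬝ᵥ A *ᵥ v i := Finset.sum_congr rfl fun i _ => hdiag i
  -- integrability
  have hint : ∀ i, IntervalIntegrable (g i) MeasureTheory.volume 0 τ := by
    intro i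
    apply ContinuousOn.intervalIntegrable
    rw [Set.uIcc_of_le hτ.le]
    exact fun t ht => (hgdiff i t ht).continuousAt.continuousWithinAt
  have hsplit : (∫ t in (0:ℝ)..τ, (M t).trace) = ∑ i, ∫ t in (0:ℝ)..τ, g i t := by
    rw [← intervalIntegral.integral_finset_sum (fun i _ => hint i)]
    apply intervalIntegral.integral_congr
    intro t _
    exact htr (M t)
  rw [hsplit]
  have hbound : ∀ i, -(Real.log (1 - τ * h0.eigenvalues i)) ≤ ∫ t in (0:ℝ)..τ, g i t := by
    intro i
    have := scalar_riccati_integral τ hτ (g i) (hgdiff i) (hgineq i)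
      (by rw [hg0 i]; exact hlt i)
    rwa [hg0 i] at this
  calc -(∑ i, Real.log (1 - τ * h0.eigenvalues i))
      = ∑ i, -(Real.log (1 - τ * h0.eigenvalues i)) := by rw [Finset.sum_neg_distrib]
    _ ≤ ∑ i, ∫ t in (0:ℝ)..τ, g i t := Finset.sum_le_sum fun i _ => hbound i
end
end
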